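/- Let N ≥ 1, Λ > 1, r₀ > 0, Φ > 0. Define E(q,ξ) = r₀Φ² + Σ_{(i,j) ∈ B_N} r₀ q_{i,j}²/ξ_{i,j} over pairs (q,ξ) where q ∈ ℝ^{2^{N+1}-2} satisfies Σ_{j=1}^{2^i} q_{i,j} = Φ for every level i ∈ {1,...,N}, and ξ has positive entries with Σ_{(i,j)} ξ_{i,j} = Λ - 1. Then the infimum of E over this set equals r₀Φ²(1 + N²/(Λ-1)), it is attained, and any minimizer (q*,ξ*) satisfies q*_{i,j}/ξ*_{i,j} = NΦ/(Λ-1) for all (i,j). -/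

import Mathlib

open Finset

/-- Problem (Q): minimize the dissipated energy
`E(q,ξ) = r₀Φ² + ∑_{(i,j)∈B_N} r₀ q_{i,j}²/ξ_{i,j}` over `q` satisfying the
level-flow constraints `∑_{j=1}^{2^i} q_{i,j} = Φ` and positive `ξ` with total
volume `Λ - 1`.  The infimum is `r₀Φ²(1 + N²/(Λ-1))`, it is attained, and any
minimizer satisfies `q_{i,j}/ξ_{i,j} = NΦ/(Λ-1)` on every branch. -/
theorem stmt3 (N : ℕ) (hN : 1 ≤ N) (Λ r0 Φ : ℝ) (hΛ : 1 < Λ) (hr0 : 0 < r0)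
    (hΦ : 0 < Φ) :
    let E : (ℕ → ℕ → ℝ) → (ℕ → ℕ → ℝ) → ℝ := fun q ξ =>
      r0 * Φ ^ 2 + ∑ i ∈ Finset.Icc 1 N, ∑ j ∈ Finset.Icc 1 (2 ^ i),
        r0 * (q i j) ^ 2 / ξ i j
    let Feas : (ℕ → ℕ → ℝ) → (ℕ → ℕ → ℝ) → Prop := fun q ξ =>
      (∀ i ∈ Finset.Icc 1 N, ∑ j ∈ Finset.Icc 1 (2 ^ i), q i j = Φ) ∧
      (∀ i ∈ Finset.Icc 1 N, ∀ j ∈ Finset.Icc 1 (2 ^ i), 0 < ξ i j) ∧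
      (∑ i ∈ Finset.Icc 1 N, ∑ j ∈ Finset.Icc 1 (2 ^ i), ξ i j = Λ - 1)
    IsGLB {e : ℝ | ∃ q ξ, Feas q ξ ∧ e = E q ξ}
        (r0 * Φ ^ 2 * (1 + (N : ℝ) ^ 2 / (Λ - 1))) ∧
    (∃ q ξ, Feas q ξ ∧ E q ξ = r0 * Φ ^ 2 * (1 + (N : ℝ) ^ 2 / (Λ - 1))) ∧
    (∀ q ξ, Feas q ξ → E q ξ = r0 * Φ ^ 2 * (1 + (N : ℝ) ^ 2 / (Λ - 1)) →
      ∀ i ∈ Finset.Icc 1 N, ∀ j ∈ Finset.Icc 1 (2 ^ i),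
        q i j / ξ i j = N * Φ / (Λ - 1)) := by
  intro E Feas
  have hΛ1 : (0:ℝ) < Λ - 1 := by linarith
  have hNR : (0:ℝ) < (N:ℝ) := by exact_mod_cast Nat.lt_of_lt_of_le Nat.zero_lt_one hN
  set c : ℝ := N * Φ / (Λ - 1) with hc
  set T : ℝ := r0 * Φ ^ 2 * (1 + (N : ℝ) ^ 2 / (Λ - 1)) with hT
  -- key identity
  have key : ∀ q ξ, Feas q ξ →
      E q ξ = T + ∑ i ∈ Finset.Icc 1 N, ∑ j ∈ Finset.Icc 1 (2 ^ i),
        r0 * (q i j - c * ξ i j) ^ 2 / ξ i j := by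
    rintro q ξ ⟨hq, hξpos, hξsum⟩
    have h1 : ∀ i ∈ Finset.Icc 1 N, ∑ j ∈ Finset.Icc 1 (2 ^ i),
        r0 * (q i j) ^ 2 / ξ i j
        = ∑ j ∈ Finset.Icc 1 (2 ^ i),
          (r0 * (q i j - c * ξ i j) ^ 2 / ξ i j
            + (2 * r0 * c * q i j - r0 * c ^ 2 * ξ i j)) := by
      intro i hi
      refine Finset.sum_congr rfl fun j hj => ?_
      have h := hξpos i hi j hj
      field_simp
      ring
    have h2 : E q ξ = r0 * Φ ^ 2
        + (∑ i ∈ Finset.Icc 1 N, ∑ j ∈ Finset.Icc 1 (2 ^ i),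
            r0 * (q i j - c * ξ i j) ^ 2 / ξ i j)
        + (2 * r0 * c * ∑ i ∈ Finset.Icc 1 N, ∑ j ∈ Finset.Icc 1 (2 ^ i), q i j)
        - r0 * c ^ 2 * ∑ i ∈ Finset.Icc 1 N, ∑ j ∈ Finset.Icc 1 (2 ^ i), ξ i j := by
      simp only [E]
      rw [Finset.sum_congr rfl h1]
      simp only [Finset.sum_add_distrib, Finset.sum_sub_distrib, Finset.mul_sum]
      ring
    have hqsum : ∑ i ∈ Finset.Icc 1 N, ∑ j ∈ Finset.Icc 1 (2 ^ i), q i j = N * Φ := by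
      rw [Finset.sum_congr rfl hq]
      simp [Nat.card_Icc, mul_comm]
    rw [h2, hqsum, hξsum, hT, hc]
    have hne : Λ - 1 ≠ 0 := ne_of_gt hΛ1
    generalize (∑ i ∈ Finset.Icc 1 N, ∑ j ∈ Finset.Icc 1 (2 ^ i),
        r0 * (q i j - N * Φ / (Λ - 1) * ξ i j) ^ 2 / ξ i j) = S
    field_simp
    ring
  have hnonneg : ∀ q ξ, Feas q ξ → ∀ i ∈ Finset.Icc 1 N, ∀ j ∈ Finset.Icc 1 (2 ^ i),
      0 ≤ r0 * (q i j - c * ξ i j) ^ 2 / ξ i j := fun q ξ hf i hi j hj =>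
    div_nonneg (mul_nonneg hr0.le (sq_nonneg _)) (hf.2.1 i hi j hj).le
  -- the explicit minimizer
  have hmem : ∃ q ξ, Feas q ξ ∧ E q ξ = T := by
    refine ⟨fun i j => Φ / 2 ^ i, fun i j => (Λ - 1) / ((N:ℝ) * 2 ^ i), ?_, ?_⟩
    · refine ⟨fun i hi => ?_, fun i hi j hj => ?_, ?_⟩
      · rw [Finset.sum_const, Nat.card_Icc]
        simp only [Nat.add_sub_cancel, nsmul_eq_mul, Nat.cast_pow, Nat.cast_ofNat]
        have h2i : ((2:ℝ)) ^ i ≠ 0 := by positivity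
        field_simp
      · positivity
      · have : ∀ i ∈ Finset.Icc 1 N, ∑ j ∈ Finset.Icc 1 (2 ^ i),
            (Λ - 1) / ((N:ℝ) * 2 ^ i) = (Λ - 1) / N := by
          intro i hi
          rw [Finset.sum_const, Nat.card_Icc]
          have h2i : ((2:ℝ)) ^ i ≠ 0 := by positivity
          simp only [Nat.add_sub_cancel, nsmul_eq_mul, Nat.cast_pow, Nat.cast_ofNat]
          field_simp
        rw [Finset.sum_congr rfl this, Finset.sum_const, Nat.card_Icc]
        simp only [Nat.add_sub_cancel, nsmul_eq_mul]
        field_simp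
    · have hfeas : Feas (fun i j => Φ / 2 ^ i) (fun i j => (Λ - 1) / ((N:ℝ) * 2 ^ i)) := by
        refine ⟨fun i hi => ?_, fun i hi j hj => ?_, ?_⟩
        · rw [Finset.sum_const, Nat.card_Icc]
          simp only [Nat.add_sub_cancel, nsmul_eq_mul, Nat.cast_pow, Nat.cast_ofNat]
          have h2i : ((2:ℝ)) ^ i ≠ 0 := by positivity
          field_simp
        · positivity
        · have : ∀ i ∈ Finset.Icc 1 N, ∑ j ∈ Finset.Icc 1 (2 ^ i),
              (Λ - 1) / ((N:ℝ) * 2 ^ i) = (Λ - 1) / N := by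
            intro i hi
            rw [Finset.sum_const, Nat.card_Icc]
            have h2i : ((2:ℝ)) ^ i ≠ 0 := by positivity
            simp only [Nat.add_sub_cancel, nsmul_eq_mul, Nat.cast_pow, Nat.cast_ofNat]
            field_simp
          rw [Finset.sum_congr rfl this, Finset.sum_const, Nat.card_Icc]
          simp only [Nat.add_sub_cancel, nsmul_eq_mul]
          field_simp
      rw [key _ _ hfeas]
      have : ∀ i ∈ Finset.Icc 1 N, ∑ j ∈ Finset.Icc 1 (2 ^ i),
          r0 * ((Φ / 2 ^ i) - c * ((Λ - 1) / ((N:ℝ) * 2 ^ i))) ^ 2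
            / ((Λ - 1) / ((N:ℝ) * 2 ^ i)) = 0 := by
        intro i hi
        refine Finset.sum_eq_zero fun j hj => ?_
        have h2i : ((2:ℝ)) ^ i ≠ 0 := by positivity
        have : (Φ / 2 ^ i) - c * ((Λ - 1) / ((N:ℝ) * 2 ^ i)) = 0 := by
          rw [hc]; field_simp; ring
        rw [this]
        simp
      rw [Finset.sum_congr rfl this]
      simp
  refine ⟨⟨fun e he => ?_, fun b hb => ?_⟩, hmem, ?_⟩
  · obtain ⟨q, ξ, hf, rfl⟩ := he
    rw [key _ _ hf]
    have : 0 ≤ ∑ i ∈ Finset.Icc 1 N, ∑ j ∈ Finset.Icc 1 (2 ^ i),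
        r0 * (q i j - c * ξ i j) ^ 2 / ξ i j :=
      Finset.sum_nonneg fun i hi => Finset.sum_nonneg fun j hj =>
        hnonneg q ξ hf i hi j hj
    linarith
  · obtain ⟨q, ξ, hf, hE⟩ := hmem
    exact hb ⟨q, ξ, hf, hE.symm⟩
  · intro q ξ hf hE i hi j hj
    have hkey := key q ξ hf
    rw [hE] at hkey
    have hsum0 : ∑ i ∈ Finset.Icc 1 N, ∑ j ∈ Finset.Icc 1 (2 ^ i),
        r0 * (q i j - c * ξ i j) ^ 2 / ξ i j = 0 := by linarith
    have h0 : r0 * (q i j - c * ξ i j) ^ 2 / ξ i j = 0 := by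
      have h1 := (Finset.sum_eq_zero_iff_of_nonneg fun i hi =>
        Finset.sum_nonneg fun j hj => hnonneg q ξ hf i hi j hj).mp hsum0 i hi
      exact (Finset.sum_eq_zero_iff_of_nonneg fun j hj =>
        hnonneg q ξ hf i hi j hj).mp h1 j hj
    have hξ := hf.2.1 i hi j hj
    have hq0 : q i j = c * ξ i j := by
      have h2 : (q i j - c * ξ i j) ^ 2 = 0 := by
        rcases div_eq_zero_iff.mp h0 with h | h
        · rcases mul_eq_zero.mp h with h' | h'
          · exact absurd h' hr0.ne'
          · exact h'
        · exact absurd h hξ.ne'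
      have := pow_eq_zero_iff (n := 2) (by norm_num) |>.mp h2
      linarith
    rw [hq0, hc]
    field_simp
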